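/- Let θ ∈ (0,π). The optimized witness W_I(θ) − 2P has the spanning property: the set of product vectors {x⊗y : x,y : Fin 4 → ℂ, ⟨x⊗y, (W_I(θ) − 2P)(x⊗y)⟩ = 0} spans all of ℂ¹⁶ (its ℂ-linear span has dimension 16). -/

import Mathlib

open Matrix Complex Real

/-- The tensor (product) vector `x ⊗ y` in `ℂ¹⁶`. -/
noncomputable def tensorVec (x y : Fin 4 → ℂ) : Fin 4 × Fin 4 → ℂ :=
  fun p => x p.1 * y p.2

/-- The expectation `⟨v, W v⟩ = ∑ i, conj (v i) * (W *ᵥ v) i`. -/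
noncomputable def expec (W : Matrix (Fin 4 × Fin 4) (Fin 4 × Fin 4) ℂ)
    (v : Fin 4 × Fin 4 → ℂ) : ℂ :=
  ∑ i, star (v i) * W.mulVec v i

/-- The Bell-diagonal matrix `W[a,b,c,d]` with `(α₀,α₁,α₂,α₃) = (a,b,c,d)`:
`W((k,m),(k',m')) = α_{(m−k) mod 4}` if `k=k', m=m'`; `−1` if `k=m, k'=m', k≠k'`;
`0` otherwise. -/
noncomputable def Wabcd (a b c d : ℝ) : Matrix (Fin 4 × Fin 4) (Fin 4 × Fin 4) ℂ :=
  fun p q =>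
    if p.1 = q.1 ∧ p.2 = q.2 then ((![a, b, c, d] (p.2 - p.1) : ℝ) : ℂ)
    else if p.1 = p.2 ∧ q.1 = q.2 ∧ p.1 ≠ q.1 then -1
    else 0

/-- The class-I witness `W_I(θ)`. -/
noncomputable def WI (θ : ℝ) : Matrix (Fin 4 × Fin 4) (Fin 4 × Fin 4) ℂ :=
  Wabcd ((2 - Real.sin θ) / 2) ((1 + Real.cos θ) / 2)
        (2 - (2 - Real.sin θ) / 2) (1 - (1 + Real.cos θ) / 2)

/-- The class-II witness `W_II(θ)`. -/
noncomputable def WII (θ : ℝ) : Matrix (Fin 4 × Fin 4) (Fin 4 × Fin 4) ℂ :=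
  Wabcd ((1 + Real.cos θ) / 2) ((2 - Real.sin θ) / 2)
        (1 - (1 + Real.cos θ) / 2) (2 - (2 - Real.sin θ) / 2)

/-- The maximally entangled vector `Ψ(j,j') = (−1)^{j+1}/2` if `j = j'`, else `0`. -/
noncomputable def PsiVec : Fin 4 × Fin 4 → ℂ :=
  fun p => if p.1 = p.2 then ((-1 : ℂ) ^ ((p.1 : ℕ) + 1)) / 2 else 0

/-- The rank-one projector `P = |Ψ⟩⟨Ψ|`. -/
noncomputable def Pmat : Matrix (Fin 4 × Fin 4) (Fin 4 × Fin 4) ℂ :=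
  fun u v => PsiVec u * star (PsiVec v)


noncomputable def pvec (k k' : Fin 4) (r s c c' : ℂ) : Fin 4 × Fin 4 → ℂ :=
  (Pi.single (k,k) 1 : Fin 4 × Fin 4 → ℂ) + (s*c') • (Pi.single (k,k') 1 : Fin 4 × Fin 4 → ℂ)
    + (r*c) • (Pi.single (k',k) 1 : Fin 4 × Fin 4 → ℂ)
    + (r*c*(s*c')) • (Pi.single (k',k') 1 : Fin 4 × Fin 4 → ℂ)

set_option maxHeartbeats 1000000 in
private lemma expecA0 (θ : ℝ) (r s : ℝ) (c : ℂ) (hc : star c * c = 1)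
    (h1 : (r:ℂ) * s = 1)
    (hb : (((1 + Real.cos θ)/2 : ℝ) : ℂ) * s^2 = Real.sin θ / 2)
    (hd : (((1 - (1 + Real.cos θ)/2) : ℝ) : ℂ) * r^2 = Real.sin θ / 2) :
    expec (WI θ - (2:ℂ) • Pmat) (tensorVec ![1, r*c, 0, 0] ![1, s * star c, 0, 0]) = 0 := by
  push_cast at hb hd
  simp only [expec, WI, Wabcd, Pmat, PsiVec, tensorVec, Matrix.mulVec, dotProduct,
    Matrix.sub_apply, Matrix.smul_apply, Fintype.sum_prod_type, Fin.sum_univ_four]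
  simp only [Complex.star_def] at hc ⊢
  norm_num [Fin.ext_iff, mul_comm, map_ofNat,
    (show ∀ (w x y z : ℝ), ![w,x,y,z] (-1) = z from fun _ _ _ _ => rfl),
    (show ∀ (w x y z : ℝ), ![w,x,y,z] (-2) = y from fun _ _ _ _ => rfl),
    (show ∀ (w x y z : ℝ), ![w,x,y,z] (-3) = x from fun _ _ _ _ => rfl),
    (show ((3:Fin 4):ℕ) = 3 from rfl), (show ((2:Fin 4):ℕ) = 2 from rfl),
    (show ((1:Fin 4):ℕ) = 1 from rfl), (show ((0:Fin 4):ℕ) = 0 from rfl)]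
  simp only [Matrix.cons_val, Matrix.cons_val_zero, Matrix.cons_val_one, Matrix.cons_val_two, Matrix.cons_val_three, Matrix.head_cons, Matrix.tail_cons, Fin.isValue, Fin.reduceSub, Complex.conj_conj, Complex.ofReal_add, Complex.ofReal_mul, Complex.ofReal_sub, Complex.ofReal_one, Complex.ofReal_div, Complex.ofReal_ofNat, Complex.ofReal_cos, Complex.ofReal_sin, map_zero, map_one, mul_zero, zero_mul, add_zero, zero_add, mul_one, one_mul]
  ring_nf
  linear_combination (c * starRingEnd ℂ c) * hb + (c * starRingEnd ℂ c) * hd +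
    (Complex.sin θ - (r:ℂ)*s + (1/2)*(c*starRingEnd ℂ c + 1)*((r:ℂ)*s)^2*(1 - Complex.sin θ)) * hc +
    (-1 + (1/2)*((r:ℂ)*s + 1)*(1 - Complex.sin θ)) * h1

set_option maxHeartbeats 1000000 in
private lemma expecA1 (θ : ℝ) (r s : ℝ) (c : ℂ) (hc : star c * c = 1)
    (h1 : (r:ℂ) * s = 1)
    (hb : (((1 + Real.cos θ)/2 : ℝ) : ℂ) * s^2 = Real.sin θ / 2)
    (hd : (((1 - (1 + Real.cos θ)/2) : ℝ) : ℂ) * r^2 = Real.sin θ / 2) :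
    expec (WI θ - (2:ℂ) • Pmat) (tensorVec ![0, 1, r*c, 0] ![0, 1, s * star c, 0]) = 0 := by
  push_cast at hb hd
  simp only [expec, WI, Wabcd, Pmat, PsiVec, tensorVec, Matrix.mulVec, dotProduct,
    Matrix.sub_apply, Matrix.smul_apply, Fintype.sum_prod_type, Fin.sum_univ_four]
  simp only [Complex.star_def] at hc ⊢
  norm_num [Fin.ext_iff, mul_comm, map_ofNat,
    (show ∀ (w x y z : ℝ), ![w,x,y,z] (-1) = z from fun _ _ _ _ => rfl),
    (show ∀ (w x y z : ℝ), ![w,x,y,z] (-2) = y from fun _ _ _ _ => rfl),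
    (show ∀ (w x y z : ℝ), ![w,x,y,z] (-3) = x from fun _ _ _ _ => rfl),
    (show ((3:Fin 4):ℕ) = 3 from rfl), (show ((2:Fin 4):ℕ) = 2 from rfl),
    (show ((1:Fin 4):ℕ) = 1 from rfl), (show ((0:Fin 4):ℕ) = 0 from rfl)]
  simp only [Matrix.cons_val, Matrix.cons_val_zero, Matrix.cons_val_one, Matrix.cons_val_two, Matrix.cons_val_three, Matrix.head_cons, Matrix.tail_cons, Fin.isValue, Fin.reduceSub, Complex.conj_conj, map_mul, Complex.conj_ofReal, Complex.ofReal_add, Complex.ofReal_mul, Complex.ofReal_sub, Complex.ofReal_one, Complex.ofReal_div, Complex.ofReal_ofNat, Complex.ofReal_cos, Complex.ofReal_sin, map_zero, map_one, mul_zero, zero_mul, add_zero, zero_add, mul_one, one_mul]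
  ring_nf
  linear_combination (c * starRingEnd ℂ c) * hb + (c * starRingEnd ℂ c) * hd +
    (Complex.sin θ - (r:ℂ)*s + (1/2)*(c*starRingEnd ℂ c + 1)*((r:ℂ)*s)^2*(1 - Complex.sin θ)) * hc +
    (-1 + (1/2)*((r:ℂ)*s + 1)*(1 - Complex.sin θ)) * h1

set_option maxHeartbeats 1000000 in
private lemma expecA2 (θ : ℝ) (r s : ℝ) (c : ℂ) (hc : star c * c = 1)
    (h1 : (r:ℂ) * s = 1)
    (hb : (((1 + Real.cos θ)/2 : ℝ) : ℂ) * s^2 = Real.sin θ / 2)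
    (hd : (((1 - (1 + Real.cos θ)/2) : ℝ) : ℂ) * r^2 = Real.sin θ / 2) :
    expec (WI θ - (2:ℂ) • Pmat) (tensorVec ![0, 0, 1, r*c] ![0, 0, 1, s * star c]) = 0 := by
  push_cast at hb hd
  simp only [expec, WI, Wabcd, Pmat, PsiVec, tensorVec, Matrix.mulVec, dotProduct,
    Matrix.sub_apply, Matrix.smul_apply, Fintype.sum_prod_type, Fin.sum_univ_four]
  simp only [Complex.star_def] at hc ⊢
  norm_num [Fin.ext_iff, mul_comm, map_ofNat,
    (show ∀ (w x y z : ℝ), ![w,x,y,z] (-1) = z from fun _ _ _ _ => rfl),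
    (show ∀ (w x y z : ℝ), ![w,x,y,z] (-2) = y from fun _ _ _ _ => rfl),
    (show ∀ (w x y z : ℝ), ![w,x,y,z] (-3) = x from fun _ _ _ _ => rfl),
    (show ((3:Fin 4):ℕ) = 3 from rfl), (show ((2:Fin 4):ℕ) = 2 from rfl),
    (show ((1:Fin 4):ℕ) = 1 from rfl), (show ((0:Fin 4):ℕ) = 0 from rfl)]
  simp only [Matrix.cons_val, Matrix.cons_val_zero, Matrix.cons_val_one, Matrix.cons_val_two, Matrix.cons_val_three, Matrix.head_cons, Matrix.tail_cons, Fin.isValue, Fin.reduceSub, Complex.conj_conj, map_mul, Complex.conj_ofReal, Complex.ofReal_add, Complex.ofReal_mul, Complex.ofReal_sub, Complex.ofReal_one, Complex.ofReal_div, Complex.ofReal_ofNat, Complex.ofReal_cos, Complex.ofReal_sin, map_zero, map_one, mul_zero, zero_mul, add_zero, zero_add, mul_one, one_mul]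
  ring_nf
  linear_combination (c * starRingEnd ℂ c) * hb + (c * starRingEnd ℂ c) * hd +
    (Complex.sin θ - (r:ℂ)*s + (1/2)*(c*starRingEnd ℂ c + 1)*((r:ℂ)*s)^2*(1 - Complex.sin θ)) * hc +
    (-1 + (1/2)*((r:ℂ)*s + 1)*(1 - Complex.sin θ)) * h1

set_option maxHeartbeats 1000000 in
private lemma expecA3 (θ : ℝ) (r s : ℝ) (c : ℂ) (hc : star c * c = 1)
    (h1 : (r:ℂ) * s = 1)
    (hb : (((1 + Real.cos θ)/2 : ℝ) : ℂ) * s^2 = Real.sin θ / 2)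
    (hd : (((1 - (1 + Real.cos θ)/2) : ℝ) : ℂ) * r^2 = Real.sin θ / 2) :
    expec (WI θ - (2:ℂ) • Pmat) (tensorVec ![r*c, 0, 0, 1] ![s * star c, 0, 0, 1]) = 0 := by
  push_cast at hb hd
  simp only [expec, WI, Wabcd, Pmat, PsiVec, tensorVec, Matrix.mulVec, dotProduct,
    Matrix.sub_apply, Matrix.smul_apply, Fintype.sum_prod_type, Fin.sum_univ_four]
  simp only [Complex.star_def] at hc ⊢
  norm_num [Fin.ext_iff, mul_comm, map_ofNat,
    (show ∀ (w x y z : ℝ), ![w,x,y,z] (-1) = z from fun _ _ _ _ => rfl),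
    (show ∀ (w x y z : ℝ), ![w,x,y,z] (-2) = y from fun _ _ _ _ => rfl),
    (show ∀ (w x y z : ℝ), ![w,x,y,z] (-3) = x from fun _ _ _ _ => rfl),
    (show ((3:Fin 4):ℕ) = 3 from rfl), (show ((2:Fin 4):ℕ) = 2 from rfl),
    (show ((1:Fin 4):ℕ) = 1 from rfl), (show ((0:Fin 4):ℕ) = 0 from rfl)]
  simp only [Matrix.cons_val, Matrix.cons_val_zero, Matrix.cons_val_one, Matrix.cons_val_two, Matrix.cons_val_three, Matrix.head_cons, Matrix.tail_cons, Fin.isValue, Fin.reduceSub, Complex.conj_conj, Complex.ofReal_add, Complex.ofReal_mul, Complex.ofReal_sub, Complex.ofReal_one, Complex.ofReal_div, Complex.ofReal_ofNat, Complex.ofReal_cos, Complex.ofReal_sin, map_zero, map_one, mul_zero, zero_mul, add_zero, zero_add, mul_one, one_mul]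
  ring_nf
  linear_combination (c * starRingEnd ℂ c) * hb + (c * starRingEnd ℂ c) * hd +
    (Complex.sin θ - (r:ℂ)*s + (1/2)*(c*starRingEnd ℂ c + 1)*((r:ℂ)*s)^2*(1 - Complex.sin θ)) * hc +
    (-1 + (1/2)*((r:ℂ)*s + 1)*(1 - Complex.sin θ)) * h1

set_option maxHeartbeats 1000000 in
private lemma expecB0 (θ : ℝ) (r s : ℝ) (c : ℂ) (hc : star c * c = 1)
    (h1 : (r:ℂ) * s = 1)
    (hb : (((1 + Real.cos θ)/2 : ℝ) : ℂ) * s^2 = Real.sin θ / 2)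
    (hd : (((1 - (1 + Real.cos θ)/2) : ℝ) : ℂ) * r^2 = Real.sin θ / 2) :
    expec (WI θ - (2:ℂ) • Pmat) (tensorVec ![1, 0, c, 0] ![1, 0, star c, 0]) = 0 := by
  push_cast at hb hd
  simp only [expec, WI, Wabcd, Pmat, PsiVec, tensorVec, Matrix.mulVec, dotProduct,
    Matrix.sub_apply, Matrix.smul_apply, Fintype.sum_prod_type, Fin.sum_univ_four]
  simp only [Complex.star_def] at hc ⊢
  norm_num [Fin.ext_iff, mul_comm, map_ofNat,
    (show ∀ (w x y z : ℝ), ![w,x,y,z] (-1) = z from fun _ _ _ _ => rfl),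
    (show ∀ (w x y z : ℝ), ![w,x,y,z] (-2) = y from fun _ _ _ _ => rfl),
    (show ∀ (w x y z : ℝ), ![w,x,y,z] (-3) = x from fun _ _ _ _ => rfl),
    (show ((3:Fin 4):ℕ) = 3 from rfl), (show ((2:Fin 4):ℕ) = 2 from rfl),
    (show ((1:Fin 4):ℕ) = 1 from rfl), (show ((0:Fin 4):ℕ) = 0 from rfl)]
  simp only [Matrix.cons_val, Matrix.cons_val_zero, Matrix.cons_val_one, Matrix.cons_val_two, Matrix.cons_val_three, Matrix.head_cons, Matrix.tail_cons, Fin.isValue, Fin.reduceSub, Complex.conj_conj, Complex.ofReal_add, Complex.ofReal_mul, Complex.ofReal_sub, Complex.ofReal_one, Complex.ofReal_div, Complex.ofReal_ofNat, Complex.ofReal_cos, Complex.ofReal_sin, map_zero, map_one, mul_zero, zero_mul, add_zero, zero_add, mul_one, one_mul]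
  ring_nf
  linear_combination ((1 - Complex.sin (θ:ℂ))/2 * ((starRingEnd ℂ) c * c - 1)) * hc

set_option maxHeartbeats 1000000 in
private lemma expecB1 (θ : ℝ) (r s : ℝ) (c : ℂ) (hc : star c * c = 1)
    (h1 : (r:ℂ) * s = 1)
    (hb : (((1 + Real.cos θ)/2 : ℝ) : ℂ) * s^2 = Real.sin θ / 2)
    (hd : (((1 - (1 + Real.cos θ)/2) : ℝ) : ℂ) * r^2 = Real.sin θ / 2) :
    expec (WI θ - (2:ℂ) • Pmat) (tensorVec ![0, 1, 0, c] ![0, 1, 0, star c]) = 0 := by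
  push_cast at hb hd
  simp only [expec, WI, Wabcd, Pmat, PsiVec, tensorVec, Matrix.mulVec, dotProduct,
    Matrix.sub_apply, Matrix.smul_apply, Fintype.sum_prod_type, Fin.sum_univ_four]
  simp only [Complex.star_def] at hc ⊢
  norm_num [Fin.ext_iff, mul_comm, map_ofNat,
    (show ∀ (w x y z : ℝ), ![w,x,y,z] (-1) = z from fun _ _ _ _ => rfl),
    (show ∀ (w x y z : ℝ), ![w,x,y,z] (-2) = y from fun _ _ _ _ => rfl),
    (show ∀ (w x y z : ℝ), ![w,x,y,z] (-3) = x from fun _ _ _ _ => rfl),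
    (show ((3:Fin 4):ℕ) = 3 from rfl), (show ((2:Fin 4):ℕ) = 2 from rfl),
    (show ((1:Fin 4):ℕ) = 1 from rfl), (show ((0:Fin 4):ℕ) = 0 from rfl)]
  simp only [Matrix.cons_val, Matrix.cons_val_zero, Matrix.cons_val_one, Matrix.cons_val_two, Matrix.cons_val_three, Matrix.head_cons, Matrix.tail_cons, Fin.isValue, Fin.reduceSub, Complex.conj_conj, Complex.ofReal_add, Complex.ofReal_mul, Complex.ofReal_sub, Complex.ofReal_one, Complex.ofReal_div, Complex.ofReal_ofNat, Complex.ofReal_cos, Complex.ofReal_sin, map_zero, map_one, mul_zero, zero_mul, add_zero, zero_add, mul_one, one_mul]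
  ring_nf
  linear_combination ((1 - Complex.sin (θ:ℂ))/2 * ((starRingEnd ℂ) c * c - 1)) * hc

private lemma tensA0 (r s c : ℂ) :
    tensorVec ![1, r*c, 0, 0] ![1, s * star c, 0, 0] = pvec 0 1 r s c (star c) := by
  funext p; obtain ⟨i,j⟩ := p
  fin_cases i <;> fin_cases j <;> simp [tensorVec, pvec, Pi.single_apply] <;> ring

private lemma tensA1 (r s c : ℂ) :
    tensorVec ![0, 1, r*c, 0] ![0, 1, s * star c, 0] = pvec 1 2 r s c (star c) := by
  funext p; obtain ⟨i,j⟩ := p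
  fin_cases i <;> fin_cases j <;> simp [tensorVec, pvec, Pi.single_apply] <;> ring

private lemma tensA2 (r s c : ℂ) :
    tensorVec ![0, 0, 1, r*c] ![0, 0, 1, s * star c] = pvec 2 3 r s c (star c) := by
  funext p; obtain ⟨i,j⟩ := p
  fin_cases i <;> fin_cases j <;> simp [tensorVec, pvec, Pi.single_apply] <;> ring

private lemma tensA3 (r s c : ℂ) :
    tensorVec ![r*c, 0, 0, 1] ![s * star c, 0, 0, 1] = pvec 3 0 r s c (star c) := by
  funext p; obtain ⟨i,j⟩ := p
  fin_cases i <;> fin_cases j <;> simp [tensorVec, pvec, Pi.single_apply] <;> ring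

private lemma tensB0 (c : ℂ) :
    tensorVec ![1, 0, c, 0] ![1, 0, star c, 0] = pvec 0 2 1 1 c (star c) := by
  funext p; obtain ⟨i,j⟩ := p
  fin_cases i <;> fin_cases j <;> simp [tensorVec, pvec, Pi.single_apply] <;> ring

private lemma tensB1 (c : ℂ) :
    tensorVec ![0, 1, 0, c] ![0, 1, 0, star c] = pvec 1 3 1 1 c (star c) := by
  funext p; obtain ⟨i,j⟩ := p
  fin_cases i <;> fin_cases j <;> simp [tensorVec, pvec, Pi.single_apply] <;> ring

private lemma pair_span (M : Submodule ℂ (Fin 4 × Fin 4 → ℂ)) (k k' : Fin 4) (r s : ℂ)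
    (hr : r ≠ 0) (hs : s ≠ 0)
    (h : ∀ c : ℂ, star c * c = 1 → pvec k k' r s c (star c) ∈ M) :
    Pi.single (k,k') (1:ℂ) ∈ M ∧ Pi.single (k',k) (1:ℂ) ∈ M ∧
      ((Pi.single (k,k) 1 : Fin 4 × Fin 4 → ℂ)
        + (r*s) • (Pi.single (k',k') 1 : Fin 4 × Fin 4 → ℂ)) ∈ M := by
  have u1 := h 1 (by norm_num)
  have u2 := h (-1) (by norm_num)
  have u3 := h I (by simp [Complex.star_def, Complex.conj_I, Complex.I_mul_I])
  have u4 := h (-I) (by simp [Complex.star_def, Complex.conj_I, Complex.I_mul_I])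
  rw [show (star (1:ℂ)) = 1 from by simp] at u1
  rw [show (star (-1:ℂ)) = -1 from by simp] at u2
  rw [show (star I) = -I from by simp [Complex.star_def, Complex.conj_I]] at u3
  rw [show (star (-I)) = I from by simp [Complex.star_def, Complex.conj_I]] at u4
  refine ⟨?_, ?_, ?_⟩
  · have hm := M.smul_mem ((4*s)⁻¹)
      (M.add_mem (M.sub_mem u1 u2) (M.smul_mem I (M.sub_mem u3 u4)))
    have e : Pi.single (k,k') (1:ℂ) =
        (4*s)⁻¹ • ((pvec k k' r s 1 1 - pvec k k' r s (-1) (-1))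
          + I • (pvec k k' r s I (-I) - pvec k k' r s (-I) I)) := by
      simp only [pvec]
      match_scalars <;> (try field_simp) <;> (try ring_nf) <;>
        (try simp only [Complex.I_sq]) <;> (try ring_nf) <;> (try norm_num)
    rw [e]; exact hm
  · have hm := M.smul_mem ((4*r)⁻¹)
      (M.add_mem (M.sub_mem u1 u2) (M.smul_mem (-I) (M.sub_mem u3 u4)))
    have e : Pi.single (k',k) (1:ℂ) =
        (4*r)⁻¹ • ((pvec k k' r s 1 1 - pvec k k' r s (-1) (-1))
          + (-I) • (pvec k k' r s I (-I) - pvec k k' r s (-I) I)) := by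
      simp only [pvec]
      match_scalars <;> (try field_simp) <;> (try ring_nf) <;>
        (try simp only [Complex.I_sq]) <;> (try ring_nf) <;> (try norm_num)
    rw [e]; exact hm
  · have hm := M.smul_mem ((4:ℂ)⁻¹)
      (M.add_mem (M.add_mem u1 u2) (M.add_mem u3 u4))
    have e : (Pi.single (k,k) 1 : Fin 4 × Fin 4 → ℂ)
        + (r*s) • (Pi.single (k',k') 1 : Fin 4 × Fin 4 → ℂ) =
        (4:ℂ)⁻¹ • ((pvec k k' r s 1 1 + pvec k k' r s (-1) (-1))
          + (pvec k k' r s I (-I) + pvec k k' r s (-I) I)) := by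
      simp only [pvec]
      match_scalars <;> (try field_simp) <;> (try ring_nf) <;>
        (try simp only [Complex.I_sq]) <;> (try ring_nf) <;> (try norm_num)
    rw [e]; exact hm

theorem WI_optimized_spanning_property (θ : ℝ) (hθ : θ ∈ Set.Ioo 0 π) :
    Submodule.span ℂ
      {v : Fin 4 × Fin 4 → ℂ |
        ∃ x y : Fin 4 → ℂ, v = tensorVec x y ∧
          expec (WI θ - (2 : ℂ) • Pmat) (tensorVec x y) = 0} = ⊤ := by
  obtain ⟨hθ1, hθ2⟩ := hθ
  have hsin : 0 < Real.sin θ := Real.sin_pos_of_pos_of_lt_pi hθ1 hθ2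
  have hcos : 0 < 1 + Real.cos θ := by
    nlinarith [Real.sin_sq_add_cos_sq θ, Real.neg_one_le_cos θ]
  set r : ℝ := Real.sqrt ((1 + Real.cos θ) / Real.sin θ) with hrdef
  set s : ℝ := Real.sqrt (Real.sin θ / (1 + Real.cos θ)) with hsdef
  have hr0 : 0 < r := Real.sqrt_pos.mpr (by positivity)
  have hs0 : 0 < s := Real.sqrt_pos.mpr (by positivity)
  have hrs : r * s = 1 := by
    rw [hrdef, hsdef, ← Real.sqrt_mul (by positivity),
      show (1 + Real.cos θ) / Real.sin θ * (Real.sin θ / (1 + Real.cos θ)) = 1 by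
        field_simp]
    exact Real.sqrt_one
  have hs2 : s ^ 2 = Real.sin θ / (1 + Real.cos θ) := Real.sq_sqrt (by positivity)
  have hr2 : r ^ 2 = (1 + Real.cos θ) / Real.sin θ := Real.sq_sqrt (by positivity)
  have hbr : ((1 + Real.cos θ)/2) * s ^ 2 = Real.sin θ / 2 := by
    rw [hs2]; field_simp
  have hdr : (1 - (1 + Real.cos θ)/2) * r ^ 2 = Real.sin θ / 2 := by
    rw [hr2]; field_simp; nlinarith [Real.sin_sq_add_cos_sq θ]
  have h1 : (r:ℂ) * s = 1 := by exact_mod_cast hrs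
  have hb : (((1 + Real.cos θ)/2 : ℝ) : ℂ) * (s:ℂ)^2 = (Real.sin θ : ℂ) / 2 := by
    exact_mod_cast hbr
  have hd : (((1 - (1 + Real.cos θ)/2) : ℝ) : ℂ) * (r:ℂ)^2 = (Real.sin θ : ℂ) / 2 := by
    exact_mod_cast hdr
  have hrne : (r:ℂ) ≠ 0 := Complex.ofReal_ne_zero.mpr (ne_of_gt hr0)
  have hsne : (s:ℂ) ≠ 0 := Complex.ofReal_ne_zero.mpr (ne_of_gt hs0)
  set M := Submodule.span ℂ
      {v : Fin 4 × Fin 4 → ℂ |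
        ∃ x y : Fin 4 → ℂ, v = tensorVec x y ∧
          expec (WI θ - (2 : ℂ) • Pmat) (tensorVec x y) = 0} with hM
  obtain ⟨e01, e10, D0⟩ := pair_span M 0 1 (r:ℂ) (s:ℂ) hrne hsne (fun c hc => by
    rw [← tensA0]
    exact Submodule.subset_span ⟨_, _, rfl, expecA0 θ r s c hc h1 hb hd⟩)
  obtain ⟨e12, e21, D1⟩ := pair_span M 1 2 (r:ℂ) (s:ℂ) hrne hsne (fun c hc => by
    rw [← tensA1]
    exact Submodule.subset_span ⟨_, _, rfl, expecA1 θ r s c hc h1 hb hd⟩)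
  obtain ⟨e23, e32, D2⟩ := pair_span M 2 3 (r:ℂ) (s:ℂ) hrne hsne (fun c hc => by
    rw [← tensA2]
    exact Submodule.subset_span ⟨_, _, rfl, expecA2 θ r s c hc h1 hb hd⟩)
  obtain ⟨e30, e03, D3⟩ := pair_span M 3 0 (r:ℂ) (s:ℂ) hrne hsne (fun c hc => by
    rw [← tensA3]
    exact Submodule.subset_span ⟨_, _, rfl, expecA3 θ r s c hc h1 hb hd⟩)
  obtain ⟨e02, e20, DB0⟩ := pair_span M 0 2 1 1 one_ne_zero one_ne_zero (fun c hc => by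
    rw [← tensB0]
    exact Submodule.subset_span ⟨_, _, rfl, expecB0 θ r s c hc h1 hb hd⟩)
  obtain ⟨e13, e31, DB1⟩ := pair_span M 1 3 1 1 one_ne_zero one_ne_zero (fun c hc => by
    rw [← tensB1]
    exact Submodule.subset_span ⟨_, _, rfl, expecB1 θ r s c hc h1 hb hd⟩)
  rw [h1, one_smul] at D0 D1 D2 D3
  rw [show ((1:ℂ)*1) = 1 by norm_num, one_smul] at DB0 DB1
  have d0 : (Pi.single (0,0) 1 : Fin 4 × Fin 4 → ℂ) ∈ M := by
    have e : (Pi.single (0,0) 1 : Fin 4 × Fin 4 → ℂ) =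
        (2:ℂ)⁻¹ • (((Pi.single (0,0) 1 : Fin 4 × Fin 4 → ℂ) + Pi.single (1,1) 1)
          - ((Pi.single (1,1) 1 : Fin 4 × Fin 4 → ℂ) + Pi.single (2,2) 1)
          + ((Pi.single (0,0) 1 : Fin 4 × Fin 4 → ℂ) + Pi.single (2,2) 1)) := by
      module
    rw [e]; exact M.smul_mem _ (M.add_mem (M.sub_mem D0 D1) DB0)
  have d1 : (Pi.single (1,1) 1 : Fin 4 × Fin 4 → ℂ) ∈ M := by
    have e : (Pi.single (1,1) 1 : Fin 4 × Fin 4 → ℂ) =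
        (2:ℂ)⁻¹ • (((Pi.single (0,0) 1 : Fin 4 × Fin 4 → ℂ) + Pi.single (1,1) 1)
          - ((Pi.single (0,0) 1 : Fin 4 × Fin 4 → ℂ) + Pi.single (2,2) 1)
          + ((Pi.single (1,1) 1 : Fin 4 × Fin 4 → ℂ) + Pi.single (2,2) 1)) := by
      module
    rw [e]; exact M.smul_mem _ (M.add_mem (M.sub_mem D0 DB0) D1)
  have d2 : (Pi.single (2,2) 1 : Fin 4 × Fin 4 → ℂ) ∈ M := by
    have e : (Pi.single (2,2) 1 : Fin 4 × Fin 4 → ℂ) =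
        (2:ℂ)⁻¹ • (((Pi.single (1,1) 1 : Fin 4 × Fin 4 → ℂ) + Pi.single (2,2) 1)
          - ((Pi.single (0,0) 1 : Fin 4 × Fin 4 → ℂ) + Pi.single (1,1) 1)
          + ((Pi.single (0,0) 1 : Fin 4 × Fin 4 → ℂ) + Pi.single (2,2) 1)) := by
      module
    rw [e]; exact M.smul_mem _ (M.add_mem (M.sub_mem D1 D0) DB0)
  have d3 : (Pi.single (3,3) 1 : Fin 4 × Fin 4 → ℂ) ∈ M := by
    have e : (Pi.single (3,3) 1 : Fin 4 × Fin 4 → ℂ) =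
        ((Pi.single (2,2) 1 : Fin 4 × Fin 4 → ℂ) + Pi.single (3,3) 1)
          - (Pi.single (2,2) 1 : Fin 4 × Fin 4 → ℂ) := by
      module
    rw [e]; exact M.sub_mem D2 d2
  have hsingle : ∀ p : Fin 4 × Fin 4, (Pi.single p 1 : Fin 4 × Fin 4 → ℂ) ∈ M := by
    intro p
    fin_cases p
    · exact d0
    · exact e01
    · exact e02
    · exact e03
    · exact e10
    · exact d1
    · exact e12
    · exact e13
    · exact e20
    · exact e21
    · exact d2
    · exact e23
    · exact e30
    · exact e31
    · exact e32
    · exact d3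
  rw [eq_top_iff]
  rintro v -
  have hv : v = ∑ p : Fin 4 × Fin 4, v p • (Pi.single p 1 : Fin 4 × Fin 4 → ℂ) := by
    funext q
    rw [Fintype.sum_apply]
    simp [Pi.single_apply]
  rw [hv]
  exact Submodule.sum_mem _ (fun p _ => Submodule.smul_mem _ _ (hsingle p))
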